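/- arXiv:1504.04448 — 2 statements merged into one kernel-verified Lean document; each statement's English description precedes it below -/
import Mathlib

section
/- Define ω : Q(n)_0 → ℤ^n by ω(i) = v^i(b(i)) = (m+n-∑_{t=1}^n i_t, i_1, i_2, ..., i_{n-1}). Then ω maps Q(n)_0 to itself, and ω^{n+1}(i) = i for every i ∈ Q(n)_0; moreover n+1 is the minimal positive integer k such that ω^k is the identity on Q(n)_0 (for m ≥ 3, n ≥ 1). -/
def Qvert (m n : ℕ) (i : Fin n → ℤ) : Prop :=
  (∀ t, 1 ≤ i t) ∧ ∀ s : Fin n, ∑ t ∈ Finset.Iic s, i t ≤ (m : ℤ) + s.val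

/-- `ω(i) = (m+n-|i|, i_1, …, i_{n-1})`. -/
def omegaMap (m n : ℕ) (i : Fin n → ℤ) : Fin n → ℤ :=
  fun t =>
    if t.val = 0 then (m : ℤ) + n - ∑ s, i s
    else i ⟨t.val - 1, lt_of_le_of_lt (Nat.pred_le _) t.isLt⟩

namespace Stmt6

/-- extension of a `Fin N` tuple to `ℕ`, padding with `1`. -/
def ge' {N : ℕ} (i : Fin N → ℤ) : ℕ → ℤ :=
  fun j => if h : j < N then i ⟨j, h⟩ else 1

lemma sum_Iic_eq {N : ℕ} (i : Fin N → ℤ) (s : Fin N) :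
    ∑ t ∈ Finset.Iic s, i t = ∑ j ∈ Finset.range (s.val + 1), ge' i j := by
  refine Finset.sum_nbij' (i := fun t : Fin N => t.val)
    (j := fun a : ℕ => ⟨min a s.val, lt_of_le_of_lt (min_le_right _ _) s.isLt⟩)
    ?_ ?_ ?_ ?_ ?_
  · intro a ha
    simp only [Finset.mem_Iic, Fin.le_def] at ha
    simp only [Finset.mem_range]
    omega
  · intro a _
    simp only [Finset.mem_Iic, Fin.le_def]
    simp
  · intro a ha
    simp only [Finset.mem_Iic, Fin.le_def] at ha
    ext
    simp [Nat.min_eq_left ha]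
  · intro a ha
    simp only [Finset.mem_range] at ha
    simp [Nat.min_eq_left (by omega : a ≤ s.val)]
  · intro a _
    simp [ge', a.isLt]

lemma sum_univ_eq {N : ℕ} (i : Fin N → ℤ) :
    ∑ t, i t = ∑ j ∈ Finset.range N, ge' i j := by
  rw [← Fin.sum_univ_eq_sum_range (ge' i) N]
  apply Finset.sum_congr rfl
  intro t _
  simp [ge', t.isLt]

lemma ge'_one_le {N : ℕ} {i : Fin N → ℤ} (h : ∀ t, 1 ≤ i t) (j : ℕ) : 1 ≤ ge' i j := by
  unfold ge'; split <;> simp [h]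

lemma sum_range_ge {N : ℕ} {i : Fin N → ℤ} (h : ∀ t, 1 ≤ i t) (v : ℕ) :
    (v : ℤ) ≤ ∑ j ∈ Finset.range v, ge' i j := by
  calc (v : ℤ) = ∑ _j ∈ Finset.range v, (1 : ℤ) := by simp
  _ ≤ _ := Finset.sum_le_sum fun j _ => ge'_one_le h j

/-- Qvert in terms of `ge'`. -/
lemma qvert_iff {m N : ℕ} (i : Fin N → ℤ) :
    Qvert m N i ↔ (∀ t, 1 ≤ i t) ∧ ∀ v < N, ∑ j ∈ Finset.range (v + 1), ge' i j ≤ (m : ℤ) + v := by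
  constructor
  · rintro ⟨h1, h2⟩
    refine ⟨h1, fun v hv => ?_⟩
    have := h2 ⟨v, hv⟩
    rwa [sum_Iic_eq] at this
  · rintro ⟨h1, h2⟩
    refine ⟨h1, fun s => ?_⟩
    rw [sum_Iic_eq]
    exact h2 s.val s.isLt

section
variable (m n' : ℕ)

lemma omega_zero (i : Fin (n' + 1) → ℤ) :
    omegaMap m (n' + 1) i 0 = (m : ℤ) + ((n' + 1 : ℕ) : ℤ) - ∑ s, i s := by
  simp [omegaMap]

lemma omega_succ (i : Fin (n' + 1) → ℤ) (t : Fin (n' + 1)) (ht : t.val ≠ 0) :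
    omegaMap m (n' + 1) i t = i ⟨t.val - 1, lt_of_le_of_lt (Nat.pred_le _) t.isLt⟩ := by
  simp [omegaMap, ht]

lemma sum_omega (i : Fin (n' + 1) → ℤ) :
    ∑ t, omegaMap m (n' + 1) i t = (m : ℤ) + ((n' + 1 : ℕ) : ℤ) - i (Fin.last n') := by
  rw [Fin.sum_univ_succ]
  have h1 : ∀ t : Fin n', omegaMap m (n' + 1) i t.succ = i t.castSucc := by
    intro t
    rw [omega_succ m n' i t.succ (Nat.succ_ne_zero t.val)]
    rfl
  rw [omega_zero]
  rw [Finset.sum_congr rfl fun t _ => h1 t]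
  rw [Fin.sum_univ_castSucc (f := i)]
  ring

/-- the extended vector in `ℤ^{N+1}`. -/
def extV (i : Fin (n' + 1) → ℤ) : Fin (n' + 2) → ℤ :=
  fun t => if h : t.val = 0 then (m : ℤ) + ((n' + 1 : ℕ) : ℤ) - ∑ s, i s
           else i ⟨t.val - 1, by have := t.isLt; omega⟩

lemma extV_inj {i j : Fin (n' + 1) → ℤ} (h : extV m n' i = extV m n' j) : i = j := by
  funext t
  have h2 := congrFun h ⟨t.val + 1, by have := t.isLt; omega⟩
  simpa [extV] using h2

lemma extV_omegaMap (i : Fin (n' + 1) → ℤ) (t : Fin (n' + 2)) :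
    extV m n' (omegaMap m (n' + 1) i) t = extV m n' i (t - 1) := by
  by_cases h : t = 0
  · subst h
    have hv : ((0 - 1 : Fin (n' + 2)) : ℕ) = n' + 1 := by
      rw [Fin.coe_sub_one]; simp
    have e1 : extV m n' (omegaMap m (n' + 1) i) 0
        = (m : ℤ) + ((n' + 1 : ℕ) : ℤ) - ∑ t, omegaMap m (n' + 1) i t := by
      simp [extV]
    have e2 : extV m n' i (0 - 1) = i (Fin.last n') := by
      simp only [extV]
      rw [dif_neg (by omega)]
      congr 1
      ext
      simp [hv]
    rw [e1, e2, sum_omega]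
    ring
  · have ht0 : t.val ≠ 0 := fun hh => h (Fin.ext hh)
    have hv : ((t - 1 : Fin (n' + 2)) : ℕ) = t.val - 1 := by
      rw [Fin.coe_sub_one, if_neg h]
    simp only [extV, hv]
    rw [dif_neg ht0]
    by_cases h1 : t.val - 1 = 0
    · rw [dif_pos h1]
      have h4 : (⟨t.val - 1, by have := t.isLt; omega⟩ : Fin (n' + 1)) = 0 := by
        ext; simpa using h1
      rw [h4, omega_zero]
    · rw [dif_neg h1]
      rw [omega_succ m n' i ⟨t.val - 1, by have := t.isLt; omega⟩ h1]

open Fin.CommRing in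
lemma extV_iterate (i : Fin (n' + 1) → ℤ) (k : ℕ) (t : Fin (n' + 2)) :
    extV m n' ((omegaMap m (n' + 1))^[k] i) t = extV m n' i (t - (k : Fin (n' + 2))) := by
  induction k generalizing t with
  | zero => simp
  | succ k ih =>
    rw [Function.iterate_succ_apply', extV_omegaMap, ih]
    congr 1
    push_cast
    ring

end

end Stmt6

open Stmt6 Fin.CommRing in
theorem stmt_6 (m n : ℕ) (hm : 3 ≤ m) (hn : 1 ≤ n) :
    (∀ i : Fin n → ℤ, Qvert m n i → Qvert m n (omegaMap m n i)) ∧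
      (∀ i : Fin n → ℤ, Qvert m n i → (omegaMap m n)^[n + 1] i = i) ∧
      (∀ k : ℕ, 0 < k →
        (∀ i : Fin n → ℤ, Qvert m n i → (omegaMap m n)^[k] i = i) →
        n + 1 ≤ k) := by
  obtain ⟨n', rfl⟩ : ∃ n', n = n' + 1 := ⟨n - 1, by omega⟩
  refine ⟨?_, ?_, ?_⟩
  · -- ω preserves Qvert
    intro i hQ
    rw [qvert_iff] at hQ ⊢
    obtain ⟨h1, h2⟩ := hQ
    have hS : ∑ j ∈ Finset.range (n' + 1), ge' i j ≤ (m : ℤ) + n' := h2 n' (by omega)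
    have hSe : ∑ s, i s = ∑ j ∈ Finset.range (n' + 1), ge' i j := sum_univ_eq i
    have hg : ∀ j < n', ge' (omegaMap m (n' + 1) i) (j + 1) = ge' i j := by
      intro j hj
      simp only [ge']
      rw [dif_pos (by omega : j + 1 < n' + 1), dif_pos (by omega : j < n' + 1)]
      rw [omega_succ m n' i ⟨j + 1, by omega⟩ (by simp)]
      rfl
    have hg0 : ge' (omegaMap m (n' + 1) i) 0
        = (m : ℤ) + ((n' + 1 : ℕ) : ℤ) - ∑ s, i s := by
      simp only [ge']
      rw [dif_pos (by omega : (0:ℕ) < n' + 1)]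
      exact omega_zero m n' i
    constructor
    · intro t
      by_cases ht : t.val = 0
      · have h0 : t = 0 := Fin.ext ht
        rw [h0, omega_zero]
        rw [hSe]
        push_cast
        linarith
      · rw [omega_succ m n' i t ht]
        exact h1 _
    · intro v hv
      rw [Finset.sum_range_succ']
      have hsum : ∑ j ∈ Finset.range v, ge' (omegaMap m (n' + 1) i) (j + 1)
          = ∑ j ∈ Finset.range v, ge' i j := by
        apply Finset.sum_congr rfl
        intro j hj
        exact hg j (by simp at hj; omega)
      rw [hsum, hg0, hSe]
      -- need: ∑_{range v} + (m + (n'+1) - ∑_{range (n'+1)}) ≤ m + v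
      have hIco : ∑ j ∈ Finset.Ico v (n' + 1), ge' i j
          = ∑ j ∈ Finset.range (n' + 1), ge' i j - ∑ j ∈ Finset.range v, ge' i j :=
        Finset.sum_Ico_eq_sub _ (by omega)
      have hcard : ((n' + 1 - v : ℕ) : ℤ) ≤ ∑ j ∈ Finset.Ico v (n' + 1), ge' i j := by
        calc ((n' + 1 - v : ℕ) : ℤ) = ∑ _j ∈ Finset.Ico v (n' + 1), (1 : ℤ) := by
              simp [Nat.card_Ico]
          _ ≤ _ := Finset.sum_le_sum fun j _ => ge'_one_le h1 j
      have hc : ((n' + 1 - v : ℕ) : ℤ) = (n' : ℤ) + 1 - v := by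
        have : v ≤ n' + 1 := by omega
        push_cast [this]
        ring
      rw [hc, hIco] at hcard
      push_cast
      linarith
  · -- ω^{n+1} = id
    intro i _
    apply extV_inj m n'
    funext t
    rw [extV_iterate]
    congr 1
    have h0 : ((n' + 1 + 1 : ℕ) : Fin (n' + 2)) = 0 := Fin.natCast_self (n' + 2)
    rw [h0, sub_zero]
  · -- minimality
    intro k hk hfix
    set i₀ : Fin (n' + 1) → ℤ := fun t => if t.val = 0 then (m : ℤ) else 1 with hi₀
    have hge : ∀ j, ge' i₀ j = if j = 0 then (m : ℤ) else 1 := by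
      intro j
      simp only [ge', hi₀]
      split
      · rfl
      · rw [if_neg (by omega)]
    have hpart : ∀ v, ∑ j ∈ Finset.range (v + 1), ge' i₀ j = (m : ℤ) + v := by
      intro v
      rw [Finset.sum_range_succ']
      have e1 : ∑ j ∈ Finset.range v, ge' i₀ (j + 1) = ∑ _j ∈ Finset.range v, (1 : ℤ) := by
        apply Finset.sum_congr rfl
        intro j _
        rw [hge, if_neg (by omega)]
      rw [e1, hge, if_pos rfl]
      simp
      ring
    have hQ0 : Qvert m (n' + 1) i₀ := by
      rw [qvert_iff]
      constructor
      · intro t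
        simp only [hi₀]
        split
        · exact_mod_cast (by omega : 1 ≤ m)
        · exact le_refl 1
      · intro v hv
        rw [hpart v]
    have hsum0 : ∑ s, i₀ s = (m : ℤ) + n' := by
      rw [sum_univ_eq, hpart n']
    have hval : ∀ τ : Fin (n' + 2), extV m n' i₀ τ = if τ.val = 1 then (m : ℤ) else 1 := by
      intro τ
      simp only [extV]
      by_cases h : τ.val = 0
      · rw [dif_pos h, if_neg (by omega), hsum0]
        push_cast
        ring
      · rw [dif_neg h]
        simp only [hi₀]
        by_cases h1 : τ.val = 1
        · rw [if_pos (by omega : τ.val - 1 = 0), if_pos h1]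
        · rw [if_neg (by omega : ¬ τ.val - 1 = 0), if_neg h1]
    have hke := hfix i₀ hQ0
    have key : extV m n' i₀ (1 + (k : Fin (n' + 2))) = extV m n' i₀ 1 := by
      have h5 := extV_iterate m n' i₀ k (1 + (k : Fin (n' + 2)))
      rw [hke] at h5
      rw [show (1 + (k : Fin (n' + 2)) - (k : Fin (n' + 2))) = 1 from by ring] at h5
      exact h5
    have hv1 : ((1 : Fin (n' + 2)) : ℕ) = 1 := by
      simp
    rw [hval, hval, hv1, if_pos rfl] at key
    have hvk : (1 + (k : Fin (n' + 2))).val = 1 := by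
      by_contra hne
      rw [if_neg hne] at key
      have : (3 : ℤ) ≤ (m : ℤ) := by exact_mod_cast hm
      omega
    have hadd : (1 + (k : Fin (n' + 2))).val = (1 + k % (n' + 2)) % (n' + 2) := by
      rw [Fin.add_def]
      simp [Fin.val_natCast]
    rw [hadd] at hvk
    set r := k % (n' + 2) with hr
    have hrlt : r < n' + 2 := Nat.mod_lt _ (by omega)
    have hr0 : r = 0 := by
      rcases lt_or_ge (1 + r) (n' + 2) with hlt | hge2
      · rw [Nat.mod_eq_of_lt hlt] at hvk
        omega
      · have he : 1 + r = n' + 2 := by omega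
        rw [he, Nat.mod_self] at hvk
        omega
    have hdvd : n' + 2 ∣ k := Nat.dvd_of_mod_eq_zero hr0
    have := Nat.le_of_dvd hk hdvd
    omega
end

section
/- Consider the map φ from Q(n+1)_0 to pairs, sending i = (i_1,...,i_n,i_{n+1}) to the pair (i', a) with i' = (i_1,...,i_{n-1}, i_n+i_{n+1}-1, 1) and a = (0,...,0, i_{n+1}-1) ∈ ℤ_{≥0}^{n+1}. Then for every i ∈ Q(n+1)_0, i' ∈ Q(n)_0 × {1} (i.e., its first n components form a vertex of Q(n)), a ∈ C(i'), and v̄^{i'}(a) = i. Conversely, every vertex of the form v̄^{i'}(a) with i' ∈ Q(n)_0 × {1} and a ∈ C(i') lies in Q(n+1)_0. Hence Q(n+1)_0 = ∪_{i' ∈ Q(n)_0 × {1}} { v̄^{i'}(a) : a ∈ C(i') }. -/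
def bvec (m n : ℕ) (i : Fin n → ℤ) : Fin (n + 1) → ℤ :=
  Fin.cases ((m : ℤ) + n - 1 - ∑ t, i t) (fun t => i t - 1)

def inC (m n : ℕ) (i : Fin n → ℤ) (a : Fin (n + 1) → ℤ) : Prop :=
  ∀ t, 0 ≤ a t ∧ a t ≤ bvec m n i t

/-- For a vertex `i' = (ip, 1) ∈ Q(n)_0 × {1}` (given by its first `n`
components `ip`) and `a ∈ ℤ^{n+1}`, the vertex
`v̄^{i'}(a) = (ip_1+a_1-a_2, …, ip_n+a_n-a_{n+1}, 1+a_{n+1}) ∈ ℤ^{n+1}`. -/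
def vbarExt {n : ℕ} (ip : Fin n → ℤ) (a : Fin (n + 1) → ℤ) :
    Fin (n + 1) → ℤ :=
  fun t =>
    if h : t.val < n then
      ip ⟨t.val, h⟩ + a ⟨t.val, Nat.lt_succ_of_lt h⟩ -
        a ⟨t.val + 1, Nat.succ_lt_succ h⟩
    else 1 + a ⟨n, Nat.lt_succ_self n⟩

/-- The first `n` components of `i' = (i_1,…,i_{n-1}, i_n+i_{n+1}-1, 1)`. -/
def ipOf {n : ℕ} (i : Fin (n + 1) → ℤ) : Fin n → ℤ :=
  fun t =>
    if t.val = n - 1 then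
      i ⟨n - 1, by omega⟩ + i ⟨n, Nat.lt_succ_self n⟩ - 1
    else i ⟨t.val, Nat.lt_succ_of_lt t.isLt⟩

/-- The vector `a = (0,…,0, i_{n+1}-1)`. -/
def aOf {n : ℕ} (i : Fin (n + 1) → ℤ) : Fin (n + 1) → ℤ :=
  fun t => if t.val = n then i ⟨n, Nat.lt_succ_self n⟩ - 1 else 0

lemma sum_Iic_eq {N : ℕ} (f : Fin N → ℤ) (F : ℕ → ℤ)
    (hF : ∀ (k : ℕ) (h : k < N), F k = f ⟨k, h⟩) :
    ∀ (v : ℕ) (h : v < N),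
      ∑ t ∈ Finset.Iic (⟨v, h⟩ : Fin N), f t = ∑ k ∈ Finset.range (v + 1), F k := by
  intro v
  induction v with
  | zero =>
    intro h
    have : Finset.Iic (⟨0, h⟩ : Fin N) = {⟨0, h⟩} := by
      ext t; simp only [Finset.mem_Iic, Finset.mem_singleton, Fin.le_def, Fin.ext_iff]; omega
    simp [this, hF 0 h]
  | succ v ih =>
    intro h
    have hv : v < N := by omega
    have hins : Finset.Iic (⟨v + 1, h⟩ : Fin N)
        = insert ⟨v + 1, h⟩ (Finset.Iic (⟨v, hv⟩ : Fin N)) := by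
      ext t; simp [Fin.le_def, Fin.ext_iff]; omega
    have hnm : (⟨v + 1, h⟩ : Fin N) ∉ Finset.Iic (⟨v, hv⟩ : Fin N) := by
      simp [Fin.le_def]
    rw [hins, Finset.sum_insert hnm, ih hv, Finset.sum_range_succ _ (v + 1), hF (v + 1) h]
    ring

lemma sum_univ_eq {N : ℕ} (hN : 1 ≤ N) (f : Fin N → ℤ) (F : ℕ → ℤ)
    (hF : ∀ (k : ℕ) (h : k < N), F k = f ⟨k, h⟩) :
    ∑ t, f t = ∑ k ∈ Finset.range N, F k := by
  have h1 : Finset.Iic (⟨N - 1, by omega⟩ : Fin N) = Finset.univ := by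
    ext t; simp [Fin.le_def]; omega
  have h2 := sum_Iic_eq f F hF (N - 1) (by omega)
  rw [h1] at h2
  rw [h2, show N - 1 + 1 = N by omega]

lemma bvec_mk_zero (m n : ℕ) (ip : Fin n → ℤ) (h : 0 < n + 1) :
    bvec m n ip ⟨0, h⟩ = (m : ℤ) + n - 1 - ∑ t, ip t := rfl

lemma bvec_mk_succ (m n : ℕ) (ip : Fin n → ℤ) (k : ℕ) (hk : k < n) :
    bvec m n ip ⟨k + 1, Nat.succ_lt_succ hk⟩ = ip ⟨k, hk⟩ - 1 := by
  have : (⟨k + 1, Nat.succ_lt_succ hk⟩ : Fin (n + 1)) = Fin.succ ⟨k, hk⟩ := rfl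
  rw [this]; simp [bvec]

lemma tail_bound {n : ℕ} (IP : ℕ → ℤ) (hIP1 : ∀ k, k < n → 1 ≤ IP k)
    (v : ℕ) (hv : v < n) :
    ∑ k ∈ Finset.range (v + 1), IP k + ((n : ℤ) - (v + 1)) ≤ ∑ k ∈ Finset.range n, IP k := by
  have hsplit : ∑ k ∈ Finset.Ico 0 (v + 1), IP k + ∑ k ∈ Finset.Ico (v + 1) n, IP k
      = ∑ k ∈ Finset.Ico 0 n, IP k :=
    Finset.sum_Ico_consecutive _ (by omega) (by omega)
  have hlow : ((Finset.Ico (v + 1) n).card : ℤ) * 1 ≤ ∑ k ∈ Finset.Ico (v + 1) n, IP k := by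
    rw [← nsmul_eq_mul]
    exact Finset.card_nsmul_le_sum _ _ _ (fun x hx => hIP1 x (Finset.mem_Ico.mp hx).2)
  rw [Nat.card_Ico] at hlow
  rw [Finset.range_eq_Ico, Finset.range_eq_Ico]
  have : ((n - (v + 1) : ℕ) : ℤ) = (n : ℤ) - (v + 1) := by push_cast; omega
  rw [this] at hlow
  linarith

theorem stmt_16 (m n : ℕ) (hm : 3 ≤ m) (hn : 1 ≤ n) :
    (∀ i : Fin (n + 1) → ℤ, Qvert m (n + 1) i →
        Qvert m n (ipOf i) ∧ inC m n (ipOf i) (aOf i) ∧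
          vbarExt (ipOf i) (aOf i) = i) ∧
      (∀ (ip : Fin n → ℤ) (a : Fin (n + 1) → ℤ), Qvert m n ip →
        inC m n ip a → Qvert m (n + 1) (vbarExt ip a)) := by
  constructor
  · -- Part 1
    intro i hi
    obtain ⟨p, rfl⟩ : ∃ p, n = p + 1 := ⟨n - 1, by omega⟩
    set I : ℕ → ℤ := fun k => if h : k < p + 1 + 1 then i ⟨k, h⟩ else 0 with hIdef
    have hI : ∀ (k : ℕ) (h : k < p + 1 + 1), I k = i ⟨k, h⟩ := fun k h => dif_pos h
    have hIpos : ∀ k, k < p + 1 + 1 → 1 ≤ I k := by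
      intro k h; rw [hI k h]; exact hi.1 _
    have hIsum : ∀ v, v < p + 1 + 1 → ∑ k ∈ Finset.range (v + 1), I k ≤ (m : ℤ) + v := by
      intro v hv
      have := hi.2 ⟨v, hv⟩
      rw [sum_Iic_eq i I hI v hv] at this
      exact this
    set IPn : ℕ → ℤ := fun k => if h : k < p + 1 then ipOf i ⟨k, h⟩ else 0 with hIPndef
    have hIPn : ∀ (k : ℕ) (h : k < p + 1), IPn k = ipOf i ⟨k, h⟩ := fun k h => dif_pos h
    have hipOf : ∀ (k : ℕ) (h : k < p + 1),
        ipOf i ⟨k, h⟩ = if k = p then I p + I (p + 1) - 1 else I k := by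
      intro k h
      simp only [ipOf, Nat.add_sub_cancel]
      by_cases hc : k = p
      · rw [if_pos hc, if_pos hc, hI p (by omega), hI (p + 1) (by omega)]
      · rw [if_neg hc, if_neg hc, hI k (by omega)]
    have haOf : ∀ (k : ℕ) (h : k < p + 1 + 1),
        aOf i ⟨k, h⟩ = if k = p + 1 then I (p + 1) - 1 else 0 := by
      intro k h
      simp only [aOf]
      by_cases hc : k = p + 1
      · rw [if_pos hc, if_pos hc, hI (p + 1) (by omega)]
      · rw [if_neg hc, if_neg hc]
    have hipos : ∀ (k : ℕ) (h : k < p + 1), 1 ≤ ipOf i ⟨k, h⟩ := by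
      intro k h
      rw [hipOf k h]
      by_cases hc : k = p
      · rw [if_pos hc]
        have h1 := hIpos p (by omega)
        have h2 := hIpos (p + 1) (by omega)
        linarith
      · rw [if_neg hc]; exact hIpos k (by omega)
    have e1 : ∑ k ∈ Finset.range (p + 1 + 1), I k
        = ∑ k ∈ Finset.range p, I k + I p + I (p + 1) := by
      rw [Finset.sum_range_succ, Finset.sum_range_succ]
    have e2 : ∑ k ∈ Finset.range (p + 1), IPn k
        = ∑ k ∈ Finset.range (p + 1 + 1), I k - 1 := by
      rw [Finset.sum_range_succ, e1]
      have h3 : ∑ k ∈ Finset.range p, IPn k = ∑ k ∈ Finset.range p, I k := by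
        apply Finset.sum_congr rfl
        intro k hk
        have hk' : k < p := Finset.mem_range.mp hk
        rw [hIPn k (by omega), hipOf k (by omega), if_neg (by omega)]
      rw [h3, hIPn p (by omega), hipOf p (by omega), if_pos rfl]
      ring
    have hQ : Qvert m (p + 1) (ipOf i) := by
      constructor
      · intro t; exact hipos t.val t.isLt
      · intro s
        have hs := sum_Iic_eq (ipOf i) IPn hIPn s.val s.isLt
        simp only [Fin.eta] at hs
        rw [hs]
        by_cases hc : s.val < p
        · have h3 : ∑ k ∈ Finset.range (s.val + 1), IPn k
              = ∑ k ∈ Finset.range (s.val + 1), I k := by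
            apply Finset.sum_congr rfl
            intro k hk
            have hk' : k < s.val + 1 := Finset.mem_range.mp hk
            rw [hIPn k (by omega), hipOf k (by omega), if_neg (by omega)]
          rw [h3]
          exact hIsum s.val (by omega)
        · have hsv : s.val = p := by have := s.isLt; omega
          rw [hsv, e2]
          have h4 := hIsum (p + 1) (by omega)
          push_cast at h4 ⊢
          linarith
    refine ⟨hQ, ?_, ?_⟩
    · -- inC
      intro t
      constructor
      · obtain ⟨k, hk⟩ := t
        rw [haOf k hk]
        by_cases hc : k = p + 1
        · rw [if_pos hc]; have := hIpos (p + 1) (by omega); linarith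
        · rw [if_neg hc]
      · induction t using Fin.cases with
        | zero =>
          rw [show (0 : Fin (p + 1 + 1)) = ⟨0, by omega⟩ from rfl, bvec_mk_zero,
            haOf 0 (by omega), if_neg (by omega)]
          have hsum : ∑ t, ipOf i t = ∑ k ∈ Finset.range (p + 1), IPn k :=
            sum_univ_eq (by omega) (ipOf i) IPn hIPn
          rw [hsum, e2]
          have h4 := hIsum (p + 1) (by omega)
          push_cast at h4 ⊢
          linarith
        | succ t' =>
          obtain ⟨k, hk⟩ := t'
          have hsucc : Fin.succ (⟨k, hk⟩ : Fin (p + 1)) = ⟨k + 1, Nat.succ_lt_succ hk⟩ := rfl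
          rw [hsucc, bvec_mk_succ m (p + 1) (ipOf i) k hk, haOf (k + 1) (by omega)]
          by_cases hc : k + 1 = p + 1
          · rw [if_pos hc, hipOf k hk, if_pos (by omega)]
            have := hIpos p (by omega)
            linarith
          · rw [if_neg hc]
            have := hipos k hk
            linarith
    · -- vbarExt = i
      funext t
      obtain ⟨k, hk⟩ := t
      by_cases h1 : k < p + 1
      · have hvb : vbarExt (ipOf i) (aOf i) ⟨k, hk⟩
            = ipOf i ⟨k, h1⟩ + aOf i ⟨k, Nat.lt_succ_of_lt h1⟩
              - aOf i ⟨k + 1, Nat.succ_lt_succ h1⟩ := by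
          simp only [vbarExt]; rw [dif_pos h1]
        rw [hvb, hipOf k h1, haOf k (by omega), haOf (k + 1) (by omega), ← hI k hk]
        by_cases hc : k = p
        · rw [if_pos hc, if_neg (by omega), if_pos (by omega), hc]; ring
        · rw [if_neg hc, if_neg (by omega), if_neg (by omega)]; ring
      · have hkn : k = p + 1 := by omega
        have hvb : vbarExt (ipOf i) (aOf i) ⟨k, hk⟩
            = 1 + aOf i ⟨p + 1, Nat.lt_succ_self (p + 1)⟩ := by
          simp only [vbarExt]; rw [dif_neg h1]
        rw [hvb, haOf (p + 1) (by omega), if_pos rfl, ← hI k hk, hkn]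
        ring
  · -- Part 2
    intro ip a hip ha
    set A : ℕ → ℤ := fun k => if h : k < n + 1 then a ⟨k, h⟩ else 0 with hAdef
    have hA : ∀ (k : ℕ) (h : k < n + 1), A k = a ⟨k, h⟩ := fun k h => dif_pos h
    set IP : ℕ → ℤ := fun k => if h : k < n then ip ⟨k, h⟩ else 0 with hIPdef
    have hIP : ∀ (k : ℕ) (h : k < n), IP k = ip ⟨k, h⟩ := fun k h => dif_pos h
    have hIP1 : ∀ k, k < n → 1 ≤ IP k := by
      intro k h; rw [hIP k h]; exact hip.1 _
    have hA0 : ∀ k, k < n + 1 → 0 ≤ A k := by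
      intro k h; rw [hA k h]; exact (ha _).1
    have hAle : ∀ k, k < n → A (k + 1) ≤ IP k - 1 := by
      intro k hk
      rw [hA (k + 1) (by omega), hIP k hk]
      have := (ha ⟨k + 1, Nat.succ_lt_succ hk⟩).2
      rwa [bvec_mk_succ m n ip k hk] at this
    have hS : ∑ t, ip t = ∑ k ∈ Finset.range n, IP k := sum_univ_eq hn ip IP hIP
    have hA0le : A 0 ≤ (m : ℤ) + n - 1 - ∑ k ∈ Finset.range n, IP k := by
      rw [hA 0 (by omega), ← hS]
      have := (ha ⟨0, by omega⟩).2
      rwa [bvec_mk_zero] at this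
    have hIPsum : ∀ v, v < n → ∑ k ∈ Finset.range (v + 1), IP k ≤ (m : ℤ) + v := by
      intro v hv
      have := hip.2 ⟨v, hv⟩
      rw [sum_Iic_eq ip IP hIP v hv] at this
      exact this
    set VF : ℕ → ℤ := fun k => if k < n then IP k + (A k - A (k + 1)) else 1 + A n with hVFdef
    have hVF : ∀ (k : ℕ) (h : k < n + 1), VF k = vbarExt ip a ⟨k, h⟩ := by
      intro k h
      simp only [VF, vbarExt]
      by_cases hk : k < n
      · rw [if_pos hk, dif_pos hk, hIP k hk, hA k h, hA (k + 1) (by omega)]; ring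
      · rw [if_neg hk, dif_neg hk, hA n (by omega)]
    have hVFsum : ∀ v, v < n → ∑ k ∈ Finset.range (v + 1), VF k
        = ∑ k ∈ Finset.range (v + 1), IP k + (A 0 - A (v + 1)) := by
      intro v hv
      have h3 : ∑ k ∈ Finset.range (v + 1), VF k
          = ∑ k ∈ Finset.range (v + 1), (IP k + (A k - A (k + 1))) := by
        apply Finset.sum_congr rfl
        intro k hk
        have hk' : k < v + 1 := Finset.mem_range.mp hk
        simp only [VF]
        rw [if_pos (by omega)]
      rw [h3, Finset.sum_add_distrib, Finset.sum_range_sub' A (v + 1)]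
    constructor
    · intro t
      obtain ⟨k, hk⟩ := t
      rw [← hVF k hk]
      simp only [VF]
      by_cases hc : k < n
      · rw [if_pos hc]
        have := hA0 k (by omega)
        have := hAle k hc
        linarith
      · rw [if_neg hc]
        have := hA0 n (by omega)
        linarith
    · intro s
      obtain ⟨v, hv⟩ := s
      rw [sum_Iic_eq (vbarExt ip a) VF (fun k h => hVF k h) v hv]
      simp only
      by_cases hc : v < n
      · rw [hVFsum v hc]
        have ht := tail_bound IP hIP1 v hc
        have h4 := hA0 (v + 1) (by omega)
        linarith
      · have hvn : v = n := by omega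
        rw [hvn, Finset.sum_range_succ]
        have hVFn : VF n = 1 + A n := by simp only [VF]; rw [if_neg (by omega)]
        have hn' : n - 1 < n := by omega
        have h5 := hVFsum (n - 1) hn'
        rw [show n - 1 + 1 = n by omega] at h5
        rw [h5, hVFn]
        have := hA0 0 (by omega)
        push_cast
        linarith
end
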